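/- Let E be a set and 𝒞, 𝒟 ⊆ 𝒫(E). Then there is a unique matroid M on ground set E such that every circuit of M belongs to 𝒞, every element of 𝒞 is a scrawl of M, every cocircuit of M (circuit of the dual matroid M*) belongs to 𝒟, and every element of 𝒟 is a scrawl of M*, if and only if 𝒞 and 𝒟 satisfy (O1), (O2) and (IM). -/

import Mathlib

open Set

variable {α : Type*}

/-- Axiom (O1): `|C ∩ D| ≠ 1` for all `C ∈ 𝒞` and `D ∈ 𝒟`. -/
def AxO1 (𝒞 𝒟 : Set (Set α)) : Prop :=
  ∀ C ∈ 𝒞, ∀ D ∈ 𝒟, (C ∩ D).encard ≠ 1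

/-- Axiom (O2): for every partition `E = P ∪̇ Q ∪̇ {e}`, either `P + e` includes an element
of `𝒞` through `e` or `Q + e` includes an element of `𝒟` through `e`. -/
def AxO2 (E : Set α) (𝒞 𝒟 : Set (Set α)) : Prop :=
  ∀ P Q : Set α, ∀ e : α, Disjoint P Q → e ∉ P → e ∉ Q → P ∪ Q ∪ {e} = E →
    (∃ C ∈ 𝒞, e ∈ C ∧ C ⊆ P ∪ {e}) ∨ (∃ D ∈ 𝒟, e ∈ D ∧ D ⊆ Q ∪ {e})

/-- The pair `(𝒞, 𝒟)` is tame: all intersections `C ∩ D` are finite. -/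
def Tame (𝒞 𝒟 : Set (Set α)) : Prop :=
  ∀ C ∈ 𝒞, ∀ D ∈ 𝒟, (C ∩ D).Finite

/-- An orthogonality system on the ground set `E`: a tame pair of families of subsets of `E`
satisfying (O1) and (O2). -/
def OrthSys (E : Set α) (𝒞 𝒟 : Set (Set α)) : Prop :=
  (∀ C ∈ 𝒞, C ⊆ E) ∧ (∀ D ∈ 𝒟, D ⊆ E) ∧ Tame 𝒞 𝒟 ∧ AxO1 𝒞 𝒟 ∧ AxO2 E 𝒞 𝒟

/-- A set `I` is independent (w.r.t. `𝒞`): it includes no nonempty element of `𝒞`. -/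
def SIndep (𝒞 : Set (Set α)) (I : Set α) : Prop :=
  ∀ C ∈ 𝒞, C ⊆ I → C = ∅

/-- `B` is a base of `X` (w.r.t. `𝒞`): a maximal independent subset of `X`. -/
def IsBaseOf (𝒞 : Set (Set α)) (X B : Set α) : Prop :=
  B ⊆ X ∧ SIndep 𝒞 B ∧ ∀ J, SIndep 𝒞 J → J ⊆ X → B ⊆ J → J = B

/-- Axiom (IM): every independent set `I` extends to a base of every `X ⊇ I`. -/
def AxIM (E : Set α) (𝒞 : Set (Set α)) : Prop :=
  ∀ I X : Set α, SIndep 𝒞 I → I ⊆ X → X ⊆ E → ∃ B, IsBaseOf 𝒞 X B ∧ I ⊆ B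

/-- The restriction `𝒞↾X` of a family of sets to `X`. -/
def resF (𝒞 : Set (Set α)) (X : Set α) : Set (Set α) := {o ∈ 𝒞 | o ⊆ X}

/-- The contraction `𝒞.X` of a family of sets to `X`. -/
def conF (𝒞 : Set (Set α)) (X : Set α) : Set (Set α) := (· ∩ X) '' 𝒞

/-- Minimal nonempty elements of a family of sets. -/
def MinNE (𝒜 : Set (Set α)) (o : Set α) : Prop :=
  o ∈ 𝒜 ∧ o.Nonempty ∧ ∀ o' ∈ 𝒜, o'.Nonempty → o' ⊆ o → o' = o

/-- `e` and `f` are in the same connected component: `e = f` or some minimal nonempty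
element of `𝒞` contains both. -/
def SameComp (𝒞 : Set (Set α)) (e f : α) : Prop :=
  e = f ∨ ∃ o, MinNE 𝒞 o ∧ e ∈ o ∧ f ∈ o

/-- A circuit of a matroid: a minimal dependent set. -/
def MatCircuit (M : Matroid α) (C : Set α) : Prop := Minimal M.Dep C

/-- A scrawl of a matroid: a (possibly empty) union of circuits. -/
def MatScrawl (M : Matroid α) (S : Set α) : Prop :=
  ∃ 𝒪 : Set (Set α), (∀ C ∈ 𝒪, MatCircuit M C) ∧ S = ⋃₀ 𝒪

namespace OrthAux

variable {N : Matroid α} {C D I J K B X P Q : Set α} {e x y : α}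

lemma encard_eq_one_of_subset_singleton (h : C ⊆ {e}) (he : e ∈ C) : C.encard = 1 := by
  have : C = {e} := subset_antisymm h (singleton_subset_iff.2 he)
  simp [this]

lemma exists_ne_of_encard_ne_one (h : C.encard ≠ 1) (he : e ∈ C) : ∃ f ∈ C, f ≠ e := by
  by_contra hc
  push_neg at hc
  exact h (encard_eq_one_of_subset_singleton (fun z hz => hc z hz) he)

lemma _root_.MatCircuit.dep (h : MatCircuit N C) : N.Dep C := h.1

lemma _root_.MatCircuit.nonempty (h : MatCircuit N C) : C.Nonempty := h.1.nonempty

lemma _root_.MatCircuit.subset_ground (h : MatCircuit N C) : C ⊆ N.E := h.1.subset_ground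

/-- Fundamental circuit : if `e ∈ cl(I) \ I` with `I` independent, there is a circuit
through `e` inside `insert e I`. -/
lemma exists_circuit_of_mem_closure (hI : N.Indep I) (he : e ∈ N.closure I) (heI : e ∉ I) :
    ∃ C, MatCircuit N C ∧ e ∈ C ∧ C ⊆ insert e I := by
  set J : Set α := {z ∈ I | e ∉ N.closure (I \ {z})} with hJdef
  have heE : e ∈ N.E := N.mem_ground_of_mem_closure he
  have hJI : J ⊆ I := sep_subset _ _
  have heJ : e ∈ N.closure J := by
    set Js : Set (Set α) := insert I ((fun z => I \ {z}) '' {z ∈ I | e ∈ N.closure (I \ {z})})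
      with hJs
    have hne : Js.Nonempty := ⟨I, mem_insert _ _⟩
    have hsubm : ∀ s ∈ Js, s ⊆ I := by
      intro s hs
      rw [hJs, mem_insert_iff, mem_image] at hs
      rcases hs with rfl | ⟨z, -, rfl⟩
      · exact Subset.rfl
      · exact diff_subset
    have hInter : ⋂₀ Js = J := by
      ext w
      simp only [hJs, hJdef, mem_sInter, mem_insert_iff, mem_image, mem_sep_iff]
      constructor
      · intro h
        have hwI : w ∈ I := h I (Or.inl rfl)
        refine ⟨hwI, fun hwcl => ?_⟩
        have := h (I \ {w}) (Or.inr ⟨w, ⟨hwI, hwcl⟩, rfl⟩)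
        exact this.2 rfl
      · rintro ⟨hwI, hwcl⟩ s hs
        rcases hs with rfl | ⟨z, ⟨hzI, hzcl⟩, rfl⟩
        · exact hwI
        · exact ⟨hwI, fun hwz => hwcl (by rw [show z = w from hwz.symm] at hzcl; exact hzcl)⟩
    have hkey := hI.closure_sInter_eq_biInter_closure_of_forall_subset hne hsubm
    rw [hInter] at hkey
    rw [hkey, mem_iInter₂]
    intro s hs
    rw [hJs, mem_insert_iff, mem_image] at hs
    rcases hs with rfl | ⟨z, ⟨hzI, hzcl⟩, rfl⟩
    · exact he
    · exact hzcl
  have heJ' : e ∉ J := fun h => heI (hJI h)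
  refine ⟨insert e J, ⟨?_, ?_⟩, mem_insert _ _, insert_subset_insert hJI⟩
  · exact (hI.subset hJI).insert_dep_iff.2 ⟨heJ, heJ'⟩
  · intro D hD hDC
    by_contra hc
    obtain ⟨z, hzC, hzD⟩ := not_subset.1 hc
    have heD : e ∈ D := by
      by_contra heD
      have hDJ : D ⊆ I := fun w hw =>
        hJI ((mem_insert_iff.1 (hDC hw)).resolve_left (fun h => heD (h ▸ hw)))
      exact hD.not_indep (hI.subset hDJ)
    have hzJ : z ∈ J := by
      rcases mem_insert_iff.1 hzC with rfl | h
      · exact absurd heD hzD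
      · exact h
    have hDe : D \ {e} ⊆ I \ {z} := by
      rintro w ⟨hwD, hwe⟩
      have hwC : w ∈ insert e J := hDC hwD
      have hwJ : w ∈ J := (mem_insert_iff.1 hwC).resolve_left (fun h => hwe h)
      exact ⟨hJI hwJ, fun hwz => hzD (by rw [show w = z from hwz] at hwD; exact hwD)⟩
    have hind : N.Indep (insert e (D \ {e})) := by
      refine ((hI.subset (hDe.trans diff_subset)).insert_indep_iff_of_notMem
        (fun h => h.2 rfl)).2 ⟨heE, fun hecl => hzJ.2 (N.closure_subset_closure hDe hecl)⟩
    rw [insert_diff_singleton, insert_eq_of_mem heD] at hind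
    exact hD.not_indep hind

lemma dep_exists_circuit_subset (hD : N.Dep D) : ∃ C, MatCircuit N C ∧ C ⊆ D := by
  obtain ⟨I, hI⟩ := N.exists_isBasis D hD.subset_ground
  obtain ⟨e, heD, heI⟩ : ∃ e ∈ D, e ∉ I := by
    by_contra h
    push_neg at h
    exact hD.not_indep (hI.indep.subset (fun z hz => h z hz))
  obtain ⟨C, hC, -, hCs⟩ := exists_circuit_of_mem_closure hI.indep (hI.subset_closure heD) heI
  exact ⟨C, hC, hCs.trans (insert_subset heD hI.subset)⟩

lemma base_exchange' (hB : N.IsBase B) (heB : e ∈ B) (hxE : x ∈ N.E)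
    (hx : x ∉ N.closure (B \ {e})) : N.IsBase (insert x (B \ {e})) := by
  have hd : N.Indep (B \ {e}) := hB.indep.subset diff_subset
  have hxB : x ∉ B \ {e} := fun h => hx (N.subset_closure _ hd.subset_ground h)
  have hind : N.Indep (insert x (B \ {e})) := (hd.insert_indep_iff_of_notMem hxB).2 ⟨hxE, hx⟩
  refine hind.isBase_of_ground_subset_closure ?_
  have hxcl : x ∈ N.closure (insert e (B \ {e})) \ N.closure (B \ {e}) := by
    rw [insert_diff_singleton, insert_eq_of_mem heB, hB.closure_eq]
    exact ⟨hxE, hx⟩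
  have hecl : e ∈ N.closure (insert x (B \ {e})) := (Matroid.closure_exchange hxcl).1
  have hBsub : B ⊆ N.closure (insert x (B \ {e})) := by
    intro w hw
    rcases eq_or_ne w e with rfl | hne
    · exact hecl
    · exact N.subset_closure _ hind.subset_ground (mem_insert_iff.2 (Or.inr ⟨hw, hne⟩))
  calc N.E = N.closure B := hB.closure_eq.symm
    _ ⊆ N.closure (insert x (B \ {e})) := N.closure_subset_closure_of_subset_closure hBsub

lemma fundCocircuit (hB : N.IsBase B) (heB : e ∈ B) :
    MatCircuit N✶ (N.E \ N.closure (B \ {e})) ∧ e ∈ N.E \ N.closure (B \ {e}) := by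
  set K := N.E \ N.closure (B \ {e}) with hKdef
  have heK : e ∈ K := ⟨hB.subset_ground heB, hB.indep.notMem_closure_diff_of_mem heB⟩
  have hBK : ∀ w ∈ B \ {e}, w ∉ K := fun w hw hwK =>
    hwK.2 (N.subset_closure _ (hB.indep.subset diff_subset).subset_ground hw)
  have hcodep : N✶.Dep K := by
    rw [Matroid.dep_iff, Matroid.dual_ground]
    refine ⟨fun hind => ?_, diff_subset⟩
    rw [Matroid.dual_indep_iff_exists'] at hind
    obtain ⟨-, B', hB', hdj⟩ := hind
    have hB'sub : B' ⊆ N.closure (B \ {e}) := by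
      intro w hw
      by_contra hwc
      exact disjoint_left.1 hdj ⟨hB'.subset_ground hw, hwc⟩ hw
    have hEsub : N.E ⊆ N.closure (B \ {e}) :=
      calc N.E = N.closure B' := hB'.closure_eq.symm
        _ ⊆ N.closure (B \ {e}) := N.closure_subset_closure_of_subset_closure hB'sub
    exact heK.2 (hEsub heK.1)
  refine ⟨⟨hcodep, ?_⟩, heK⟩
  intro D hD hDK
  by_contra hc
  obtain ⟨z, hzK, hzD⟩ := not_subset.1 hc
  have hind : N✶.Indep (K \ {z}) := by
    rw [Matroid.dual_indep_iff_exists']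
    refine ⟨diff_subset.trans diff_subset, ?_⟩
    rcases eq_or_ne z e with rfl | hne
    · refine ⟨B, hB, disjoint_left.2 fun w hw hwB => ?_⟩
      exact hBK w ⟨hwB, hw.2⟩ hw.1
    · have hzE : z ∈ N.E := hzK.1
      have hzcl : z ∉ N.closure (B \ {e}) := hzK.2
      refine ⟨insert z (B \ {e}), base_exchange' hB heB hzE hzcl, disjoint_left.2 ?_⟩
      rintro w ⟨hwK, hwz⟩ hwB
      rcases mem_insert_iff.1 hwB with rfl | hwB'
      · exact hwz rfl
      · exact hBK w hwB' hwK
  exact hD.not_indep (hind.subset (subset_diff_singleton hDK hzD))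

lemma circuit_inter_cocircuit_encard_ne_one (hC : MatCircuit N C) (hK : MatCircuit N✶ K) :
    (C ∩ K).encard ≠ 1 := by
  intro h1
  obtain ⟨e, he⟩ := encard_eq_one.1 h1
  have heCK : e ∈ C ∩ K := by rw [he]; exact rfl
  have hKE : K ⊆ N.E := by
    have := hK.subset_ground
    rwa [Matroid.dual_ground] at this
  have heKmem : e ∈ K := heCK.2
  -- K \ {e} is coindependent
  have hKe_ind : N✶.Indep (K \ {e}) := by
    by_contra hni
    have hdep : N✶.Dep (K \ {e}) := by
      rw [Matroid.dep_iff, Matroid.dual_ground]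
      exact ⟨hni, diff_subset.trans hKE⟩
    exact (hK.2 hdep diff_subset heKmem).2 rfl
  rw [Matroid.dual_indep_iff_exists'] at hKe_ind
  obtain ⟨-, B₀, hB₀, hdj⟩ := hKe_ind
  -- e ∈ B₀
  have heB₀ : e ∈ B₀ := by
    by_contra heB₀
    have hdjK : Disjoint K B₀ := disjoint_left.2 fun w hwK hwB => by
      rcases eq_or_ne w e with rfl | hne
      · exact heB₀ hwB
      · exact disjoint_left.1 hdj ⟨hwK, hne⟩ hwB
    have : N✶.Indep K := by
      rw [Matroid.dual_indep_iff_exists']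
      exact ⟨hKE, B₀, hB₀, hdjK⟩
    exact hK.dep.not_indep this
  obtain ⟨hK', heK'⟩ := fundCocircuit hB₀ heB₀
  -- K' ⊆ K
  have hK'K : N.E \ N.closure (B₀ \ {e}) ⊆ K := by
    intro z hz
    by_contra hzK
    have hB'' := base_exchange' hB₀ heB₀ hz.1 hz.2
    have hdjK : Disjoint K (insert z (B₀ \ {e})) := disjoint_left.2 fun w hwK hwB => by
      rcases mem_insert_iff.1 hwB with rfl | hwB'
      · exact hzK hwK
      · exact disjoint_left.1 hdj ⟨hwK, hwB'.2⟩ hwB'.1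
    have : N✶.Indep K := by
      rw [Matroid.dual_indep_iff_exists']
      exact ⟨hKE, _, hB'', hdjK⟩
    exact hK.dep.not_indep this
  have hKeq : K = N.E \ N.closure (B₀ \ {e}) :=
    subset_antisymm (hK.2 hK'.dep hK'K) hK'K
  -- now the circuit side
  have heC : e ∈ C := heCK.1
  have hCe_ind : N.Indep (C \ {e}) := by
    by_contra hni
    have hdep : N.Dep (C \ {e}) := ⟨hni, diff_subset.trans hC.subset_ground⟩
    exact (hC.2 hdep diff_subset heC).2 rfl
  have hecl : e ∈ N.closure (C \ {e}) := by
    have hdep : N.Dep (insert e (C \ {e})) := by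
      rw [insert_diff_singleton, insert_eq_of_mem heC]; exact hC.dep
    exact (hCe_ind.insert_dep_iff.1 hdep).1
  have hCsub : C \ {e} ⊆ N.closure (B₀ \ {e}) := by
    rintro w ⟨hwC, hwe⟩
    have hwK : w ∉ K := fun hwK => hwe (by
      have : w ∈ C ∩ K := ⟨hwC, hwK⟩
      rw [he] at this
      exact this)
    have hwE : w ∈ N.E := hC.subset_ground hwC
    by_contra hwcl
    exact hwK (hKeq ▸ ⟨hwE, hwcl⟩)
  have : e ∈ N.closure (B₀ \ {e}) :=
    N.closure_subset_closure_of_subset_closure hCsub hecl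
  exact (hKeq ▸ heKmem).2 this

lemma partition_circuit_or_cocircuit (hPQ : Disjoint P Q) (heP : e ∉ P) (heQ : e ∉ Q)
    (hU : P ∪ Q ∪ {e} = N.E) :
    (∃ C, MatCircuit N C ∧ e ∈ C ∧ C ⊆ P ∪ {e}) ∨
    (∃ D, MatCircuit N✶ D ∧ e ∈ D ∧ D ⊆ Q ∪ {e}) := by
  have heE : e ∈ N.E := by rw [← hU]; exact Or.inr rfl
  have hPE : P ⊆ N.E := by rw [← hU]; exact fun z hz => Or.inl (Or.inl hz)
  obtain ⟨I, hI⟩ := N.exists_isBasis P hPE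
  have heI : e ∉ I := fun h => heP (hI.subset h)
  by_cases hecl : e ∈ N.closure I
  · left
    obtain ⟨C, hC, heC, hCs⟩ := exists_circuit_of_mem_closure hI.indep hecl heI
    rw [union_singleton]
    exact ⟨C, hC, heC, hCs.trans (insert_subset_insert hI.subset)⟩
  · right
    have hind : N.Indep (insert e I) := (hI.indep.insert_indep_iff_of_notMem heI).2 ⟨heE, hecl⟩
    obtain ⟨B, hB, hsub⟩ := hind.exists_isBase_superset
    have heB : e ∈ B := hsub (mem_insert _ _)
    obtain ⟨hK, heK⟩ := fundCocircuit hB heB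
    refine ⟨_, hK, heK, ?_⟩
    intro w hw
    have hIB : I ⊆ B \ {e} := fun z hz =>
      ⟨hsub (mem_insert_iff.2 (Or.inr hz)), fun h => heI (by rw [show z = e from h] at hz; exact hz)⟩
    have hwE : w ∈ N.E := hw.1
    rw [← hU] at hwE
    rcases hwE with (hwP | hwQ) | hwe
    · exact absurd ((N.closure_subset_closure hIB) (hI.subset_closure hwP)) hw.2
    · exact Or.inl hwQ
    · exact Or.inr hwe

lemma not_sindep {𝒜 : Set (Set α)} (h : ¬ SIndep 𝒜 X) :
    ∃ C ∈ 𝒜, C.Nonempty ∧ C ⊆ X := by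
  rw [SIndep] at h
  push_neg at h
  obtain ⟨C, hC, hsub, hne⟩ := h
  exact ⟨C, hC, hne, hsub⟩

lemma sindep_subset {𝒜 : Set (Set α)} (h : SIndep 𝒜 J) (hIJ : I ⊆ J) : SIndep 𝒜 I :=
  fun C hC hCI => h C hC (hCI.trans hIJ)

lemma mem_of_nonempty_subset_insert {𝒜 : Set (Set α)} (hB : SIndep 𝒜 B) (hC : C ∈ 𝒜)
    (hne : C.Nonempty) (hsub : C ⊆ insert e B) : e ∈ C := by
  by_contra he
  exact hne.ne_empty (hB C hC fun z hz =>
    (mem_insert_iff.1 (hsub hz)).resolve_left (fun h => he (h ▸ hz)))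

lemma O1_contra {𝒜 ℬ : Set (Set α)} (hO1 : AxO1 𝒜 ℬ)
    (hC : C ∈ 𝒜) (hD : D ∈ ℬ) (hCs : C ⊆ insert y B) (hyC : y ∈ C) (hyD : y ∈ D)
    (hDB : ∀ b ∈ D, b ∈ B → False) : False := by
  apply hO1 C hC D hD
  refine encard_eq_one_of_subset_singleton (C := C ∩ D) (e := y) ?_ ⟨hyC, hyD⟩
  rintro z ⟨hzC, hzD⟩
  rcases mem_insert_iff.1 (hCs hzC) with rfl | hzB
  · rfl
  · exact (hDB z hzD hzB).elim

lemma partition_union {E : Set α} (hX : X ⊆ E) (he : e ∈ E) :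
    X ∪ (E \ insert e X) ∪ {e} = E := by
  ext w
  simp only [mem_union, mem_diff, mem_singleton_iff, mem_insert_iff]
  constructor
  · rintro ((h | h) | rfl)
    · exact hX h
    · exact h.1
    · exact he
  · intro hw
    by_cases hwX : w ∈ X
    · exact Or.inl (Or.inl hwX)
    · by_cases hwe : w = e
      · exact Or.inr hwe
      · exact Or.inl (Or.inr ⟨hw, fun h => h.elim hwe hwX⟩)

lemma partition_disjoint {E : Set α} : Disjoint X (E \ insert e X) :=
  disjoint_left.2 fun w hwX hwQ => hwQ.2 (Or.inr hwX)

lemma not_mem_Q {E : Set α} : e ∉ E \ insert e X := fun h => h.2 (Or.inl rfl)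

lemma D_not_mem {E : Set α} (heX : e ∉ X) (hD : D ⊆ (E \ insert e X) ∪ {e}) :
    ∀ b ∈ D, b ∈ X → False := fun b hb hbX => by
  rcases (mem_union _ _ _).1 (hD hb) with h | h
  · exact h.2 (Or.inr hbX)
  · exact heX (by rw [← mem_singleton_iff.1 h]; exact hbX)

lemma D_mem_of_ne {E : Set α} {b : α} (hD : D ⊆ (E \ insert e X) ∪ {e}) (hb : b ∈ D)
    (hne : b ≠ e) : b ∈ E ∧ b ∉ insert e X := by
  rcases (mem_union _ _ _).1 (hD hb) with h | h
  · exact ⟨h.1, h.2⟩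
  · exact absurd (mem_singleton_iff.1 h) hne

lemma axO1_symm {𝒜 ℬ : Set (Set α)} (h : AxO1 𝒜 ℬ) : AxO1 ℬ 𝒜 := by
  intro D hD C hC
  rw [inter_comm]
  exact h C hC D hD

lemma axO2_symm {E : Set α} {𝒜 ℬ : Set (Set α)} (h : AxO2 E 𝒜 ℬ) : AxO2 E ℬ 𝒜 := by
  intro P Q e hdj heP heQ hU
  have := h Q P e hdj.symm heQ heP (by rw [union_comm Q P]; exact hU)
  exact this.symm

lemma indep_char {E : Set α} {𝒞 : Set (Set α)} (hE : N.E = E)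
    (hcirc : ∀ C, MatCircuit N C → C ∈ 𝒞) (hscr : ∀ C ∈ 𝒞, MatScrawl N C) :
    ∀ I, N.Indep I ↔ SIndep 𝒞 I ∧ I ⊆ E := by
  intro I
  constructor
  · intro hI
    refine ⟨fun C hC hCI => ?_, hE ▸ hI.subset_ground⟩
    by_contra hne
    obtain ⟨z, hz⟩ := nonempty_iff_ne_empty.2 hne
    obtain ⟨𝒪, h𝒪, hCeq⟩ := hscr C hC
    have hz' : z ∈ ⋃₀ 𝒪 := hCeq ▸ hz
    obtain ⟨C', hC'mem, -⟩ := hz'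
    have hC'C : C' ⊆ C := hCeq ▸ subset_sUnion_of_mem hC'mem
    exact ((h𝒪 C' hC'mem).dep.not_indep) (hI.subset (hC'C.trans hCI))
  · rintro ⟨hSI, hIE⟩
    by_contra hni
    have hdep : N.Dep I := ⟨hni, hE.symm ▸ hIE⟩
    obtain ⟨C, hC, hCI⟩ := dep_exists_circuit_subset hdep
    exact hC.nonempty.ne_empty (hSI C (hcirc C hC) hCI)

end OrthAux

namespace OrthAux

variable {N : Matroid α} {E : Set α} {𝒞 𝒟 : Set (Set α)}

lemma exists_matroid (h𝒞 : ∀ C ∈ 𝒞, C ⊆ E)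
    (hO1 : AxO1 𝒞 𝒟) (hO2 : AxO2 E 𝒞 𝒟) (hIM : AxIM E 𝒞) :
    ∃ M : Matroid α, M.E = E ∧ ∀ I, M.Indep I ↔ SIndep 𝒞 I ∧ I ⊆ E := by
  set Ind : Set α → Prop := fun I => SIndep 𝒞 I ∧ I ⊆ E with hInd
  -- the key contradiction : if `B` is maximal, `I` is a "base" of `I ∪ B`, then
  -- no `e ∉ I` has `insert e I` independent.
  have key : ∀ B I e, Maximal Ind B → SIndep 𝒞 I → I ⊆ E →
      (∀ J, SIndep 𝒞 J → J ⊆ I ∪ B → I ⊆ J → J = I) → e ∈ E → e ∉ I →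
      SIndep 𝒞 (insert e I) → False := by
    intro B I e hBmax hI hIE hImax heE heI heind
    have heB : e ∉ B := by
      intro heB
      have : insert e I = I := hImax _ heind
        (insert_subset (Or.inr heB) subset_union_left) (subset_insert _ _)
      exact heI (this ▸ mem_insert e I)
    rcases hO2 I (E \ insert e I) e partition_disjoint heI not_mem_Q
        (partition_union hIE heE) with ⟨C, hC, heC, hCs⟩ | ⟨D, hD, heD, hDs⟩
    · rw [union_singleton] at hCs
      exact absurd (heind C hC hCs) (Set.Nonempty.ne_empty ⟨e, heC⟩)
    · have hDI : ∀ b ∈ D, b ∈ I → False := D_not_mem heI hDs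
      -- insert e B is not SIndep
      have hBni : ¬ SIndep 𝒞 (insert e B) := by
        intro hsi
        have : insert e B ⊆ B := hBmax.2 ⟨hsi, insert_subset heE hBmax.prop.2⟩
          (subset_insert _ _)
        exact heB (this (mem_insert _ _))
      obtain ⟨C₁, hC₁, hC₁ne, hC₁s⟩ := not_sindep hBni
      have heC₁ : e ∈ C₁ := mem_of_nonempty_subset_insert hBmax.prop.1 hC₁ hC₁ne hC₁s
      obtain ⟨f, hfC₁D, hfe⟩ := exists_ne_of_encard_ne_one (hO1 C₁ hC₁ D hD) ⟨heC₁, heD⟩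
      have hfB : f ∈ B := (mem_insert_iff.1 (hC₁s hfC₁D.1)).resolve_left hfe
      have hfI : f ∉ I := fun h => hDI f hfC₁D.2 h
      have hfni : ¬ SIndep 𝒞 (insert f I) := by
        intro hsi
        have : insert f I = I := hImax _ hsi
          (insert_subset (Or.inr hfB) subset_union_left) (subset_insert _ _)
        exact hfI (this ▸ mem_insert f I)
      obtain ⟨C₂, hC₂, hC₂ne, hC₂s⟩ := not_sindep hfni
      have hfC₂ : f ∈ C₂ := mem_of_nonempty_subset_insert hI hC₂ hC₂ne hC₂s
      exact O1_contra hO1 hC₂ hD hC₂s hfC₂ hfC₁D.2 hDI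
  refine ⟨(IndepMatroid.mk E Ind ?_ ?_ ?_ ?_ ?_).matroid, rfl, fun I => Iff.rfl⟩
  · exact ⟨fun C _ h => subset_empty_iff.1 h, empty_subset E⟩
  · exact fun I J hJ hIJ => ⟨sindep_subset hJ.1 hIJ, hIJ.trans hJ.2⟩
  · intro I B hI hInmax hBmax
    obtain ⟨I', hI', hII', hnI⟩ : ∃ I', Ind I' ∧ I ⊆ I' ∧ ¬ (I' ⊆ I) := by
      by_contra h
      push_neg at h
      exact hInmax ⟨hI, fun J hJ hIJ => h J hJ hIJ⟩
    obtain ⟨e, heI', heI⟩ := not_subset.1 hnI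
    have heind : SIndep 𝒞 (insert e I) := sindep_subset hI'.1 (insert_subset heI' hII')
    obtain ⟨B', ⟨hB'X, hB'si, hB'max⟩, hIB'⟩ :=
      hIM I (I ∪ B) hI.1 subset_union_left (union_subset hI.2 hBmax.prop.2)
    by_cases hBI : (B' \ I).Nonempty
    · obtain ⟨z, hzB', hzI⟩ := hBI
      have hzB : z ∈ B := (hB'X hzB').resolve_left hzI
      exact ⟨z, ⟨hzB, hzI⟩, sindep_subset hB'si (insert_subset hzB' hIB'),
        insert_subset (hBmax.prop.2 hzB) hI.2⟩
    · have hB'I : B' = I := subset_antisymm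
        (fun z hz => by_contra fun hzI => hBI ⟨z, hz, hzI⟩) hIB'
      rw [hB'I] at hB'max
      exact absurd (key B I e hBmax hI.1 hI.2 (fun J hJ hJX hIJ => hB'max J hJ hJX hIJ)
        (hI'.2 heI') heI heind) not_false
  · intro X hXE I hI hIX
    obtain ⟨B, ⟨hBX, hBsi, hBmax⟩, hIB⟩ := hIM I X hI.1 hIX hXE
    refine ⟨B, hIB, ⟨⟨hBsi, hBX.trans hXE⟩, hBX⟩, fun K hK hBK => ?_⟩
    exact (hBmax K hK.1.1 hK.2 hBK).le
  · exact fun I hI => hI.2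

lemma dual_char (hE : N.E = E)
    (hchar : ∀ I, N.Indep I ↔ SIndep 𝒞 I ∧ I ⊆ E)
    (hO1 : AxO1 𝒞 𝒟) (hO2 : AxO2 E 𝒞 𝒟) :
    ∀ K, N✶.Indep K ↔ SIndep 𝒟 K ∧ K ⊆ E := by
  intro K
  constructor
  · intro hind
    rw [Matroid.dual_indep_iff_exists'] at hind
    obtain ⟨hKE, B, hB, hdj⟩ := hind
    refine ⟨fun D hD hDK => ?_, hE ▸ hKE⟩
    by_contra hne
    obtain ⟨f, hfD⟩ := nonempty_iff_ne_empty.2 hne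
    have hfK : f ∈ K := hDK hfD
    have hfB : f ∉ B := disjoint_left.1 hdj hfK
    have hdep : N.Dep (insert f B) := hB.insert_dep ⟨hKE hfK, hfB⟩
    have hBsi : SIndep 𝒞 B := ((hchar B).1 hB.indep).1
    have hni : ¬ SIndep 𝒞 (insert f B) := by
      intro hsi
      exact hdep.not_indep ((hchar _).2 ⟨hsi, insert_subset (hE ▸ hKE hfK)
        (hE ▸ hB.subset_ground)⟩)
    obtain ⟨C, hC, hCne, hCs⟩ := not_sindep hni
    have hfC : f ∈ C := mem_of_nonempty_subset_insert hBsi hC hCne hCs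
    exact (O1_contra hO1 hC hD hCs hfC hfD
      (fun b hb hbB => disjoint_left.1 hdj (hDK hb) hbB)).elim
  · rintro ⟨hKsi, hKE⟩
    obtain ⟨B, hB⟩ := N.exists_isBasis (E \ K) (by rw [hE]; exact diff_subset)
    have hBsi : SIndep 𝒞 B := ((hchar B).1 hB.indep).1
    have hBase : N.IsBase B := by
      rw [Matroid.isBase_iff_maximal_indep]
      refine ⟨hB.indep, fun J hJ hBJ => ?_⟩
      intro g hg
      by_contra hgB
      have hgE : g ∈ E := hE ▸ hJ.subset_ground hg
      have hins : N.Indep (insert g B) := hJ.subset (insert_subset hg hBJ)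
      have hgEK : g ∉ E \ K → g ∈ K := fun h => by
        by_contra hgK
        exact h ⟨hgE, hgK⟩
      by_cases hgK : g ∈ K
      · -- O2 argument
        have hgB' : g ∉ B := hgB
        rcases hO2 B (E \ insert g B) g partition_disjoint hgB' not_mem_Q
            (partition_union (hB.subset.trans diff_subset) hgE)
          with ⟨C, hC, hgC, hCs⟩ | ⟨D, hD, hgD, hDs⟩
        · rw [union_singleton] at hCs
          exact absurd (((hchar _).1 hins).1 C hC hCs)
            (Set.Nonempty.ne_empty ⟨g, hgC⟩)
        · have hDB : ∀ b ∈ D, b ∈ B → False := D_not_mem hgB' hDs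
          obtain ⟨h0, hh0D, hh0K⟩ : ∃ h0 ∈ D, h0 ∉ K := by
            by_contra hcon
            push_neg at hcon
            exact (Set.Nonempty.ne_empty ⟨g, hgD⟩) (hKsi D hD hcon)
          have hh0g : h0 ≠ g := fun h => hh0K (h ▸ hgK)
          obtain ⟨hh0E, hh0B⟩ := D_mem_of_ne hDs hh0D hh0g
          have hh0B' : h0 ∉ B := fun h => hh0B (Or.inr h)
          have hni : ¬ N.Indep (insert h0 B) := by
            intro hind
            have := hB.eq_of_subset_indep hind (subset_insert _ _)
              (insert_subset ⟨hh0E, hh0K⟩ hB.subset)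
            exact hh0B' (this ▸ mem_insert h0 B)
          have hnsi : ¬ SIndep 𝒞 (insert h0 B) := by
            intro hsi
            exact hni ((hchar _).2 ⟨hsi, insert_subset hh0E (hB.subset.trans diff_subset)⟩)
          obtain ⟨C₂, hC₂, hC₂ne, hC₂s⟩ := not_sindep hnsi
          have hh0C₂ : h0 ∈ C₂ := mem_of_nonempty_subset_insert hBsi hC₂ hC₂ne hC₂s
          exact (O1_contra hO1 hC₂ hD hC₂s hh0C₂ hh0D hDB).elim
      · have := hB.eq_of_subset_indep hins (subset_insert _ _)
          (insert_subset ⟨hgE, hgK⟩ hB.subset)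
        exact hgB (this ▸ mem_insert g B)
    rw [Matroid.dual_indep_iff_exists']
    refine ⟨hE.symm ▸ hKE, B, hBase, disjoint_left.2 fun w hwK hwB => ?_⟩
    exact (hB.subset hwB).2 hwK

lemma scrawl_side {𝒜 ℬ : Set (Set α)} (hE : N.E = E)
    (h𝒜 : ∀ A ∈ 𝒜, A ⊆ E)
    (hchar : ∀ I, N.Indep I ↔ SIndep 𝒜 I ∧ I ⊆ E)
    (hO1 : AxO1 𝒜 ℬ) (hO2 : AxO2 E 𝒜 ℬ) :
    (∀ C, MatCircuit N C → C ∈ 𝒜) ∧ (∀ C ∈ 𝒜, MatScrawl N C) := by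
  constructor
  · intro C hC
    have hCE : C ⊆ E := hE ▸ hC.dep.subset_ground
    have hnsi : ¬ SIndep 𝒜 C := fun h => hC.dep.not_indep ((hchar C).2 ⟨h, hCE⟩)
    obtain ⟨C', hC', hne, hsub⟩ := not_sindep hnsi
    have hC'dep : N.Dep C' := ⟨fun hind => hne.ne_empty (((hchar C').1 hind).1 C' hC'
      Subset.rfl), hE.symm ▸ h𝒜 C' hC'⟩
    have : C = C' := subset_antisymm (hC.2 hC'dep hsub) hsub
    exact this ▸ hC'
  · intro C hC𝒜
    refine ⟨{C₀ | MatCircuit N C₀ ∧ C₀ ⊆ C}, fun _ h => h.1, ?_⟩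
    apply subset_antisymm
    · intro x hxC
      have hCE : C ⊆ E := h𝒜 C hC𝒜
      obtain ⟨B, hB⟩ := N.exists_isBasis (C \ {x}) (by rw [hE]; exact diff_subset.trans hCE)
      have hxE : x ∈ N.E := hE.symm ▸ hCE hxC
      have hxB : x ∉ B := fun h => (hB.subset h).2 rfl
      have hBsi : SIndep 𝒜 B := ((hchar B).1 hB.indep).1
      have hxcl : x ∈ N.closure B := by
        by_contra hxcl
        have hins : N.Indep (insert x B) :=
          (hB.indep.insert_indep_iff_of_notMem hxB).2 ⟨hxE, hxcl⟩
        rcases hO2 B (E \ insert x B) x partition_disjoint hxB not_mem_Q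
            (partition_union (hB.subset.trans (diff_subset.trans hCE)) (hCE hxC))
          with ⟨C', hC', hxC', hC's⟩ | ⟨D, hD, hxD, hDs⟩
        · rw [union_singleton] at hC's
          exact absurd (((hchar _).1 hins).1 C' hC' hC's)
            (Set.Nonempty.ne_empty ⟨x, hxC'⟩)
        · have hDB : ∀ b ∈ D, b ∈ B → False := D_not_mem hxB hDs
          obtain ⟨y, hyCD, hyx⟩ := exists_ne_of_encard_ne_one (hO1 C hC𝒜 D hD) ⟨hxC, hxD⟩
          obtain ⟨hyE, hyB⟩ := D_mem_of_ne hDs hyCD.2 hyx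
          have hyB' : y ∉ B := fun h => hyB (Or.inr h)
          have hycl : y ∈ N.closure B := hB.subset_closure ⟨hyCD.1, hyx⟩
          have hydep : N.Dep (insert y B) := hB.indep.insert_dep_iff.2 ⟨hycl, hyB'⟩
          have hnsi : ¬ SIndep 𝒜 (insert y B) := by
            intro hsi
            exact hydep.not_indep ((hchar _).2 ⟨hsi,
              insert_subset hyE (hB.subset.trans (diff_subset.trans hCE))⟩)
          obtain ⟨C₂, hC₂, hC₂ne, hC₂s⟩ := not_sindep hnsi
          have hyC₂ : y ∈ C₂ := mem_of_nonempty_subset_insert hBsi hC₂ hC₂ne hC₂s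
          exact (O1_contra hO1 hC₂ hD hC₂s hyC₂ hyCD.2 hDB).elim
      obtain ⟨C₀, hC₀, hxC₀, hC₀s⟩ := exists_circuit_of_mem_closure hB.indep hxcl hxB
      exact mem_sUnion.2 ⟨C₀, ⟨hC₀, hC₀s.trans (insert_subset hxC
        (hB.subset.trans diff_subset))⟩, hxC₀⟩
    · exact sUnion_subset fun C₀ h => h.2

end OrthAux

/-- For families `𝒞, 𝒟` of subsets of `E`, there is a unique matroid `M`
on ground set `E` with `𝒞(M) ⊆ 𝒞 ⊆ 𝒮(M)` and `𝒞(M✶) ⊆ 𝒟 ⊆ 𝒮(M✶)` if and only if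
`𝒞` and `𝒟` satisfy (O1), (O2) and (IM). -/
theorem unique_matroid_iff_O1_O2_IM (E : Set α) (𝒞 𝒟 : Set (Set α))
    (h𝒞 : ∀ C ∈ 𝒞, C ⊆ E) (h𝒟 : ∀ D ∈ 𝒟, D ⊆ E) :
    (∃! M : Matroid α, M.E = E ∧
        (∀ C, MatCircuit M C → C ∈ 𝒞) ∧ (∀ C ∈ 𝒞, MatScrawl M C) ∧
        (∀ D, MatCircuit M✶ D → D ∈ 𝒟) ∧ (∀ D ∈ 𝒟, MatScrawl M✶ D)) ↔
      (AxO1 𝒞 𝒟 ∧ AxO2 E 𝒞 𝒟 ∧ AxIM E 𝒞) := by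
  constructor
  · rintro ⟨M, ⟨hME, hc1, hc2, hd1, hd2⟩, -⟩
    have hchar := OrthAux.indep_char hME hc1 hc2
    refine ⟨?_, ?_, ?_⟩
    · -- (O1)
      intro C hC D hD h1
      obtain ⟨e, he⟩ := Set.encard_eq_one.1 h1
      have heCD : e ∈ C ∩ D := by rw [he]; exact rfl
      obtain ⟨𝒪C, h𝒪C, hCeq⟩ := hc2 C hC
      have heU : e ∈ ⋃₀ 𝒪C := hCeq ▸ heCD.1
      obtain ⟨C', hC'mem, heC'⟩ := heU
      obtain ⟨𝒪D, h𝒪D, hDeq⟩ := hd2 D hD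
      have heU' : e ∈ ⋃₀ 𝒪D := hDeq ▸ heCD.2
      obtain ⟨D', hD'mem, heD'⟩ := heU'
      refine OrthAux.circuit_inter_cocircuit_encard_ne_one (h𝒪C C' hC'mem) (h𝒪D D' hD'mem) ?_
      refine OrthAux.encard_eq_one_of_subset_singleton (C := C' ∩ D') (e := e) ?_ ⟨heC', heD'⟩
      rintro z ⟨hzC', hzD'⟩
      have hzC : z ∈ C := hCeq ▸ (subset_sUnion_of_mem hC'mem hzC')
      have hzD : z ∈ D := hDeq ▸ (subset_sUnion_of_mem hD'mem hzD')
      have : z ∈ C ∩ D := ⟨hzC, hzD⟩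
      rw [he] at this
      exact this
    · -- (O2)
      intro P Q e hdj heP heQ hU
      rcases OrthAux.partition_circuit_or_cocircuit (N := M) hdj heP heQ
          (hU.trans hME.symm) with ⟨C, hC, heC, hCs⟩ | ⟨D, hD, heD, hDs⟩
      · exact Or.inl ⟨C, hc1 C hC, heC, hCs⟩
      · exact Or.inr ⟨D, hd1 D hD, heD, hDs⟩
    · -- (IM)
      intro I X hI hIX hXE
      have hIi : M.Indep I := (hchar I).2 ⟨hI, hIX.trans hXE⟩
      obtain ⟨B, hB, hIB⟩ := hIi.subset_isBasis_of_subset hIX (by rw [hME]; exact hXE)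
      refine ⟨B, ⟨hB.subset, ((hchar B).1 hB.indep).1, fun J hJ hJX hBJ => ?_⟩, hIB⟩
      exact (hB.eq_of_subset_indep ((hchar J).2 ⟨hJ, hJX.trans hXE⟩) hBJ hJX).symm
  · rintro ⟨hO1, hO2, hIM⟩
    obtain ⟨M, hME, hchar⟩ := OrthAux.exists_matroid h𝒞 hO1 hO2 hIM
    have hdchar := OrthAux.dual_char hME hchar hO1 hO2
    have h1 := OrthAux.scrawl_side hME h𝒞 hchar hO1 hO2
    have h2 := OrthAux.scrawl_side (N := M✶) (by rw [Matroid.dual_ground]; exact hME)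
      h𝒟 hdchar (OrthAux.axO1_symm hO1) (OrthAux.axO2_symm hO2)
    refine ⟨M, ⟨hME, h1.1, h1.2, h2.1, h2.2⟩, ?_⟩
    rintro M' ⟨hM'E, hc1, hc2, -, -⟩
    have hchar' := OrthAux.indep_char hM'E hc1 hc2
    apply Matroid.ext_indep (by rw [hM'E, hME])
    intro I hIE
    rw [hchar' I, hchar I]
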